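/- Let D be a triangulated category with shift functor Σ and let (X,Y) be a cotorsion pair in D. Then the following conditions are equivalent: (1) Hom(X, Σ^k Y) = 0 for all X ∈ X, Y ∈ Y and all k ≥ 2; (2) Hom(X, Σ²Y) = 0 for all X ∈ X, Y ∈ Y; (3) Σ⁻¹X ⊆ X; (4) ΣY ⊆ Y. -/

import Mathlib

open CategoryTheory Limits Pretriangulated

universe v u

variable {C : Type u} [Category.{v} C] [Preadditive C] [HasZeroObject C]
  [HasShift C ℤ] [∀ n : ℤ, (CategoryTheory.shiftFunctor C n).Additive] [Pretriangulated C]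

/-- `A` and `B` form a biproduct decomposition of `E`. -/
def IsBiprodDecomp (A B E : C) : Prop :=
  ∃ (i : A ⟶ E) (j : B ⟶ E) (p : E ⟶ A) (q : E ⟶ B),
    i ≫ p = 𝟙 A ∧ j ≫ q = 𝟙 B ∧ i ≫ q = 0 ∧ j ≫ p = 0 ∧ p ≫ i + q ≫ j = 𝟙 E

/-- `A` is a direct summand of `E`. -/
def IsDirectSummand (A E : C) : Prop := ∃ B, IsBiprodDecomp A B E

/-- A class of objects is closed under direct summands. -/
def SummandClosed (X : Set C) : Prop := ∀ ⦃A E : C⦄, E ∈ X → IsDirectSummand A E → A ∈ X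

/-- The essential image of a class of objects under the shift by `n`. -/
def shiftSet (n : ℤ) (X : Set C) : Set C := {A | ∃ B ∈ X, Nonempty (A ≅ B⟦n⟧)}

/-- The class `X ∗ Y` of objects `E` admitting a distinguished triangle
`A ⟶ E ⟶ B ⟶ ΣA` with `A ∈ X` and `B ∈ Y`. -/
def starSet (X Y : Set C) : Set C :=
  {E | ∃ (A B : C) (_ : A ∈ X) (_ : B ∈ Y) (f : A ⟶ E) (g : E ⟶ B) (h : B ⟶ A⟦(1 : ℤ)⟧),
    Triangle.mk f g h ∈ distTriang C}

/-- A co-t-structure on a triangulated category. -/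
structure IsCoTStructure (U V : Set C) : Prop where
  summand_U : SummandClosed U
  summand_V : SummandClosed V
  hom_zero : ∀ ⦃A B : C⦄, A ∈ U → B ∈ V → ∀ f : A ⟶ B⟦(1 : ℤ)⟧, f = 0
  cover : ∀ E : C, E ∈ starSet (shiftSet (-1) U) V
  shift_le : shiftSet (-1) U ⊆ U

/-- A cotorsion pair in a triangulated category. -/
structure IsCotorsionPair (X Y : Set C) : Prop where
  summand_X : SummandClosed X
  summand_Y : SummandClosed Y
  hom_zero : ∀ ⦃A B : C⦄, A ∈ X → B ∈ Y → ∀ f : A ⟶ B⟦(1 : ℤ)⟧, f = 0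
  cover₁ : ∀ E : C, E ∈ starSet X (shiftSet 1 Y)
  cover₂ : ∀ E : C, E ∈ starSet (shiftSet (-1) X) Y

/-- `A` is a direct summand of `E` inside the full additive subcategory `H`. -/
def IsDirectSummandIn (H : Set C) (A E : C) : Prop :=
  A ∈ H ∧ ∃ B ∈ H, IsBiprodDecomp A B E

/-- A cotorsion pair in an extension-closed subcategory `H` of a triangulated category. -/
structure IsCotorsionPairIn (H A B : Set C) : Prop where
  subset_A : A ⊆ H
  subset_B : B ⊆ H
  summand_A : ∀ ⦃X E : C⦄, E ∈ A → IsDirectSummandIn H X E → X ∈ A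
  summand_B : ∀ ⦃X E : C⦄, E ∈ B → IsDirectSummandIn H X E → X ∈ B
  hom_zero : ∀ ⦃X Y : C⦄, X ∈ A → Y ∈ B → ∀ f : X ⟶ Y⟦(1 : ℤ)⟧, f = 0
  tri₁ : ∀ ⦃M : C⦄, M ∈ H → ∃ (X Y : C) (_ : X ∈ A) (_ : Y ∈ B)
    (f : Y ⟶ X) (g : X ⟶ M) (h : M ⟶ Y⟦(1 : ℤ)⟧), Triangle.mk f g h ∈ distTriang C
  tri₂ : ∀ ⦃M : C⦄, M ∈ H → ∃ (X Y : C) (_ : X ∈ A) (_ : Y ∈ B)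
    (f : M ⟶ Y) (g : Y ⟶ X) (h : X ⟶ M⟦(1 : ℤ)⟧), Triangle.mk f g h ∈ distTriang C

/-- The closure of a class of objects under finite direct sums and direct summands. -/
inductive addClosure (X : Set C) : C → Prop
  | of {A : C} : A ∈ X → addClosure X A
  | sum {A B E : C} : addClosure X A → addClosure X B → IsBiprodDecomp A B E → addClosure X E
  | summand {A E : C} : addClosure X E → IsDirectSummand A E → addClosure X A

/-- `hatN M n` is `M ∗ ΣM ∗ ⋯ ∗ ΣⁿM`. -/
def hatN (M : Set C) : ℕ → Set C
  | 0 => M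
  | n + 1 => starSet (hatN M n) (shiftSet ((n : ℤ) + 1) M)

/-- `M^∧ = ⋃_{n ≥ 0} M ∗ ΣM ∗ ⋯ ∗ ΣⁿM`. -/
def hatSet (M : Set C) : Set C := ⋃ n : ℕ, hatN M n

/-- `veeN M n` is `Σ⁻ⁿM ∗ ⋯ ∗ Σ⁻¹M ∗ M`. -/
def veeN (M : Set C) : ℕ → Set C
  | 0 => M
  | n + 1 => starSet (shiftSet (-((n : ℤ) + 1)) M) (veeN M n)

/-- `M^∨ = ⋃_{n ≥ 0} Σ⁻ⁿM ∗ ⋯ ∗ Σ⁻¹M ∗ M`. -/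
def veeSet (M : Set C) : Set C := ⋃ n : ℕ, veeN M n

/-- `bandN M m n` is `Σ⁻ᵐM ∗ ⋯ ∗ M ∗ ΣM ∗ ⋯ ∗ ΣⁿM`. -/
def bandN (M : Set C) : ℕ → ℕ → Set C
  | 0, n => hatN M n
  | m + 1, n => starSet (shiftSet (-((m : ℤ) + 1)) M) (bandN M m n)

/-- A class of objects is closed under extensions. -/
def ExtClosed (S : Set C) : Prop := ∀ ⦃T : Triangle C⦄, T ∈ (distTriang C) →
  T.obj₁ ∈ S → T.obj₃ ∈ S → T.obj₂ ∈ S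

/-- A class of objects is closed under cones. -/
def ConesClosed (S : Set C) : Prop := ∀ ⦃T : Triangle C⦄, T ∈ (distTriang C) →
  T.obj₁ ∈ S → T.obj₂ ∈ S → T.obj₃ ∈ S

/-- A class of objects is closed under cocones. -/
def CoconesClosed (S : Set C) : Prop := ∀ ⦃T : Triangle C⦄, T ∈ (distTriang C) →
  T.obj₂ ∈ S → T.obj₃ ∈ S → T.obj₁ ∈ S

/-- The thick closure of a class of objects: the smallest class containing it which is
closed under extensions, cones, cocones and direct summands. -/
inductive thickClosure (X : Set C) : C → Prop
  | of {A : C} : A ∈ X → thickClosure X A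
  | ext {T : Triangle C} : T ∈ (distTriang C) → thickClosure X T.obj₁ → thickClosure X T.obj₃ →
      thickClosure X T.obj₂
  | cone {T : Triangle C} : T ∈ (distTriang C) → thickClosure X T.obj₁ → thickClosure X T.obj₂ →
      thickClosure X T.obj₃
  | cocone {T : Triangle C} : T ∈ (distTriang C) → thickClosure X T.obj₂ → thickClosure X T.obj₃ →
      thickClosure X T.obj₁
  | summand {A E : C} : thickClosure X E → IsDirectSummand A E → thickClosure X A

/-- A presilting subcategory. -/
def IsPresilting (M : Set C) : Prop :=
  SummandClosed M ∧
    ∀ ⦃A B : C⦄, A ∈ M → B ∈ M → ∀ k : ℤ, 1 ≤ k → ∀ f : A ⟶ B⟦k⟧, f = 0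

/-- A silting subcategory. -/
def IsSilting (M : Set C) : Prop := IsPresilting M ∧ ∀ A : C, thickClosure M A

/-- A co-t-structure `(U, V)` is bounded if `⋃ₙ ΣⁿU = D = ⋃ₙ ΣⁿV`. -/
def BoundedPair (U V : Set C) : Prop :=
  (⋃ n : ℤ, shiftSet n U) = (Set.univ : Set C) ∧ (⋃ n : ℤ, shiftSet n V) = (Set.univ : Set C)

section Aux

lemma IsBiprodDecomp.swap {A B E : C} (h : IsBiprodDecomp A B E) : IsBiprodDecomp B A E := by
  obtain ⟨i, j, p, q, h1, h2, h3, h4, h5⟩ := h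
  exact ⟨j, i, q, p, h2, h1, h4, h3, by rw [add_comm]; exact h5⟩

lemma mem_of_iso {S : Set C} (hS : SummandClosed S) {A E : C} (e : A ≅ E) (hE : E ∈ S) :
    A ∈ S := by
  obtain ⟨Z, hZ⟩ := HasZeroObject.zero (C := C)
  refine hS hE ⟨Z, e.hom, 0, e.inv, 0, by simp, ?_, by simp, by simp, by simp⟩
  exact hZ.eq_of_src _ _

lemma split_of_mor₃_zero {T : Triangle C} (hT : T ∈ distTriang C) (hz : T.mor₃ = 0) :
    IsBiprodDecomp T.obj₃ T.obj₁ T.obj₂ := by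
  obtain ⟨e, -, -⟩ := exists_iso_binaryBiproduct_of_distTriang T hT hz
  refine ⟨biprod.inr ≫ e.inv, biprod.inl ≫ e.inv, e.hom ≫ biprod.snd, e.hom ≫ biprod.fst,
    by simp, by simp, by simp, by simp, ?_⟩
  have htotal : (biprod.fst ≫ biprod.inl : T.obj₁ ⊞ T.obj₃ ⟶ _) + biprod.snd ≫ biprod.inr =
      𝟙 _ := biprod.total
  calc (e.hom ≫ biprod.snd) ≫ biprod.inr ≫ e.inv + (e.hom ≫ biprod.fst) ≫ biprod.inl ≫ e.inv
      = e.hom ≫ (biprod.fst ≫ biprod.inl + biprod.snd ≫ biprod.inr) ≫ e.inv := by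
        simp only [Preadditive.add_comp, Preadditive.comp_add, Category.assoc]
        rw [add_comm]
    _ = 𝟙 T.obj₂ := by rw [htotal]; simp

lemma summand_of_mor₂_zero {T : Triangle C} (hT : T ∈ distTriang C) (hz : T.mor₂ = 0) :
    IsDirectSummand T.obj₂ T.obj₁ := by
  refine ⟨T.obj₃⟦(-1 : ℤ)⟧, split_of_mor₃_zero (inv_rot_of_distTriang T hT) ?_⟩
  dsimp [Triangle.invRotate]
  rw [hz]
  exact zero_comp

lemma summand_of_mor₁_zero {T : Triangle C} (hT : T ∈ distTriang C) (hz : T.mor₁ = 0) :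
    IsDirectSummand T.obj₂ T.obj₃ := by
  refine ⟨T.obj₁⟦(1 : ℤ)⟧, IsBiprodDecomp.swap (split_of_mor₃_zero (rot_of_distTriang T hT) ?_)⟩
  dsimp [Triangle.rotate]
  rw [hz, Functor.map_zero, neg_zero]
  rfl

lemma shift_neg_mem {X : Set C} (hX : SummandClosed X) (h3 : shiftSet (-1) X ⊆ X) :
    ∀ (n : ℕ) (A : C), A ∈ X → ∀ m : ℤ, m = -(n : ℤ) → A⟦m⟧ ∈ X := by
  intro n
  induction n with
  | zero =>
    intro A hA m hm
    have : m = 0 := by omega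
    subst this
    exact mem_of_iso hX ((shiftFunctorZero C ℤ).app A) hA
  | succ k ih =>
    intro A hA m hm
    have hA' : A⟦(-(k : ℤ))⟧ ∈ X := ih A hA _ rfl
    refine h3 ⟨A⟦(-(k : ℤ))⟧, hA', ⟨?_⟩⟩
    exact (shiftFunctorAdd' C (-(k : ℤ)) (-1) m (by omega)).app A

lemma map_shift_zero {A B : C} (n : ℤ) (f : A ⟶ B)
    (hf : (shiftFunctor C n).map f = 0) : f = 0 :=
  (shiftFunctor C n).map_injective (by rw [hf, Functor.map_zero])

lemma cond3_to_cond1 {X Y : Set C} (h : IsCotorsionPair X Y) (h3 : shiftSet (-1) X ⊆ X) :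
    ∀ ⦃A B : C⦄, A ∈ X → B ∈ Y → ∀ k : ℤ, 2 ≤ k → ∀ f : A ⟶ B⟦k⟧, f = 0 := by
  intro A B hA hB k hk f
  set m : ℤ := 1 - k with hm
  have hAm : A⟦m⟧ ∈ X := shift_neg_mem h.summand_X h3 (k - 1).toNat A hA m (by omega)
  have hφ : (shiftFunctor C m).map f ≫ (shiftFunctorAdd' C k m 1 (by omega)).inv.app B = 0 :=
    h.hom_zero hAm hB _
  apply map_shift_zero m
  calc (shiftFunctor C m).map f
      = ((shiftFunctor C m).map f ≫ (shiftFunctorAdd' C k m 1 (by omega)).inv.app B) ≫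
        (shiftFunctorAdd' C k m 1 (by omega)).hom.app B := by simp
    _ = 0 := by rw [hφ, zero_comp]

lemma cond2_to_cond3 {X Y : Set C} (h : IsCotorsionPair X Y)
    (h2 : ∀ ⦃A B : C⦄, A ∈ X → B ∈ Y → ∀ f : A ⟶ B⟦(2 : ℤ)⟧, f = 0) :
    shiftSet (-1) X ⊆ X := by
  rintro A' ⟨A, hA, ⟨e⟩⟩
  obtain ⟨X₀, Z, hX₀, hZ, f, g, hh, hT⟩ := h.cover₁ A'
  obtain ⟨Y₀, hY₀, ⟨e₂⟩⟩ := hZ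
  have hg : g = 0 := by
    set g' : A⟦(-1 : ℤ)⟧ ⟶ Y₀⟦(1 : ℤ)⟧ := e.inv ≫ g ≫ e₂.hom with hg'
    have hmap : (shiftFunctor C (1 : ℤ)).map g' = 0 := by
      set α := (shiftFunctorCompIsoId C (-1 : ℤ) 1 (by ring)).app A
      set β := (shiftFunctorAdd' C (1 : ℤ) 1 2 (by ring)).inv.app Y₀
      have h0 : α.inv ≫ (shiftFunctor C (1 : ℤ)).map g' ≫ β = 0 := h2 hA hY₀ _
      calc (shiftFunctor C (1 : ℤ)).map g'
          = α.hom ≫ (α.inv ≫ (shiftFunctor C (1 : ℤ)).map g' ≫ β) ≫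
            (shiftFunctorAdd' C (1 : ℤ) 1 2 (by ring)).hom.app Y₀ := by simp [β]
        _ = 0 := by rw [h0]; simp
    have : g' = 0 := map_shift_zero _ _ hmap
    calc g = e.hom ≫ g' ≫ e₂.inv := by simp [hg']
      _ = 0 := by rw [this]; simp
  exact h.summand_X hX₀ (summand_of_mor₂_zero hT hg)

lemma cond4_to_cond3 {X Y : Set C} (h : IsCotorsionPair X Y) (h4 : shiftSet 1 Y ⊆ Y) :
    shiftSet (-1) X ⊆ X := by
  rintro A' ⟨A, hA, ⟨e⟩⟩
  obtain ⟨X₀, Z, hX₀, hZ, f, g, hh, hT⟩ := h.cover₁ A'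
  have hZY : Z ∈ Y := h4 hZ
  have hg : g = 0 := by
    have hmap : (shiftFunctor C (1 : ℤ)).map g = 0 := by
      set ι : A'⟦(1 : ℤ)⟧ ≅ A :=
        (shiftFunctor C (1 : ℤ)).mapIso e ≪≫ (shiftFunctorCompIsoId C (-1 : ℤ) 1 (by ring)).app A
      have h0 : ι.inv ≫ (shiftFunctor C (1 : ℤ)).map g = 0 := h.hom_zero hA hZY _
      calc (shiftFunctor C (1 : ℤ)).map g
          = ι.hom ≫ (ι.inv ≫ (shiftFunctor C (1 : ℤ)).map g) := by simp
        _ = 0 := by rw [h0]; simp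
    exact map_shift_zero _ _ hmap
  exact h.summand_X hX₀ (summand_of_mor₂_zero hT hg)

lemma cond3_to_cond4 {X Y : Set C} (h : IsCotorsionPair X Y) (h3 : shiftSet (-1) X ⊆ X) :
    shiftSet 1 Y ⊆ Y := by
  rintro B' hB'
  obtain ⟨W, Y₀, hW, hY₀, f, g, hh, hT⟩ := h.cover₂ B'
  obtain ⟨B, hB, ⟨e⟩⟩ := hB'
  have hWX : W ∈ X := h3 hW
  have hf : f = 0 := by
    have h0 : f ≫ e.hom = 0 := h.hom_zero hWX hB _
    calc f = (f ≫ e.hom) ≫ e.inv := by simp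
      _ = 0 := by rw [h0]; simp
  exact h.summand_Y hY₀ (summand_of_mor₁_zero hT hf)

end Aux

/-- Theorem: for a cotorsion pair `(X,Y)` in a triangulated category, the conditions
(1) `Hom(X, Σ^k Y) = 0` for all `k ≥ 2`, (2) `Hom(X, Σ²Y) = 0`, (3) `Σ⁻¹X ⊆ X`, and
(4) `ΣY ⊆ Y` are all equivalent. -/
theorem stmt3 {X Y : Set C} (h : IsCotorsionPair X Y) :
    ((∀ ⦃A B : C⦄, A ∈ X → B ∈ Y → ∀ k : ℤ, 2 ≤ k → ∀ f : A ⟶ B⟦k⟧, f = 0) ↔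
      (∀ ⦃A B : C⦄, A ∈ X → B ∈ Y → ∀ f : A ⟶ B⟦(2 : ℤ)⟧, f = 0)) ∧
    ((∀ ⦃A B : C⦄, A ∈ X → B ∈ Y → ∀ f : A ⟶ B⟦(2 : ℤ)⟧, f = 0) ↔
      shiftSet (-1) X ⊆ X) ∧
    (shiftSet (-1) X ⊆ X ↔ shiftSet 1 Y ⊆ Y) := by
  refine ⟨⟨fun h1 A B hA hB f => h1 hA hB 2 le_rfl f,
    fun h2 => cond3_to_cond1 h (cond2_to_cond3 h h2)⟩,
    ⟨fun h2 => cond2_to_cond3 h h2,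
    fun h3 A B hA hB f => cond3_to_cond1 h h3 hA hB 2 le_rfl f⟩,
    ⟨fun h3 => cond3_to_cond4 h h3, fun h4 => cond4_to_cond3 h h4⟩⟩
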